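/- Let $h:\mathbb{R}^N\to(0,\infty)$ be smooth with $\kappa(h)=\kappa/h$ for a constant $\kappa>0$. Then the capillary tensor divergence $\mathrm{div}K=\nabla\big(h\kappa(h)\Delta h+\tfrac12(\kappa(h)+h\kappa'(h))|\nabla h|^2\big)-\mathrm{div}\big(\kappa(h)\nabla h\otimes\nabla h\big)$ satisfies, componentwise, $\mathrm{div}K = \kappa\, h\,\nabla\big(\Delta \ln h + \tfrac12 |\nabla \ln h|^2\big)$ wherever $h>0$. -/

import Mathlib

open MeasureTheory Real Set
open scoped ENNReal NNReal

noncomputable section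

abbrev Rn (N : ℕ) := EuclideanSpace ℝ (Fin N)

variable {N : ℕ}

/-- Partial derivative in the `i`-th coordinate direction. -/
def pd (i : Fin N) (f : Rn N → ℝ) : Rn N → ℝ :=
  fun x => fderiv ℝ f x (EuclideanSpace.single i 1)

/-- Laplacian. -/
def lap (f : Rn N → ℝ) : Rn N → ℝ := fun x => ∑ i, pd i (pd i f) x

/-- Squared norm of the gradient. -/
def gradSq (f : Rn N → ℝ) : Rn N → ℝ := fun x => ∑ i, (pd i f x) ^ 2

section Helpers

variable {f g : Rn N → ℝ} {x : Rn N} {i j : Fin N}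

lemma contDiff_pd (hf : ContDiff ℝ (⊤ : ℕ∞) f) (i : Fin N) :
    ContDiff ℝ (⊤ : ℕ∞) (pd i f) := by
  have h1 : ContDiff ℝ (⊤ : ℕ∞) (fderiv ℝ f) := (contDiff_infty_iff_fderiv.mp hf).2
  exact (ContinuousLinearMap.apply ℝ ℝ (EuclideanSpace.single i 1)).contDiff.comp h1

lemma diffAll (hf : ContDiff ℝ (⊤ : ℕ∞) f) : Differentiable ℝ f :=
  (contDiff_infty_iff_fderiv.mp hf).1

lemma pd_add (hf : DifferentiableAt ℝ f x) (hg : DifferentiableAt ℝ g x) :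
    pd i (fun y => f y + g y) x = pd i f x + pd i g x := by
  simp [pd, fderiv_fun_add hf hg]

lemma pd_sub (hf : DifferentiableAt ℝ f x) (hg : DifferentiableAt ℝ g x) :
    pd i (fun y => f y - g y) x = pd i f x - pd i g x := by
  simp [pd, fderiv_fun_sub hf hg]

lemma pd_mul (hf : DifferentiableAt ℝ f x) (hg : DifferentiableAt ℝ g x) :
    pd i (fun y => f y * g y) x = pd i f x * g x + f x * pd i g x := by
  simp [pd, fderiv_fun_mul hf hg]; ring

lemma pd_const_mul (hf : DifferentiableAt ℝ f x) (c : ℝ) :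
    pd i (fun y => c * f y) x = c * pd i f x := by
  simp [pd, fderiv_const_mul hf]

lemma pd_inv (hg : DifferentiableAt ℝ g x) (hx : g x ≠ 0) :
    pd i (fun y => (g y)⁻¹) x = -(pd i g x) / (g x) ^ 2 := by
  have h1 : HasFDerivAt (fun y => (g y)⁻¹)
      ((-((ContinuousLinearMap.mulLeftRight ℝ ℝ) (g x)⁻¹ (g x)⁻¹)).comp (fderiv ℝ g x)) x :=
    (hasFDerivAt_inv' (𝕜 := ℝ) hx).comp x hg.hasFDerivAt
  rw [pd, h1.fderiv]
  simp only [ContinuousLinearMap.comp_apply, ContinuousLinearMap.neg_apply,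
    ContinuousLinearMap.mulLeftRight_apply, pd]
  field_simp

lemma pd_div (hf : DifferentiableAt ℝ f x) (hg : DifferentiableAt ℝ g x) (hx : g x ≠ 0) :
    pd i (fun y => f y / g y) x = (pd i f x * g x - f x * pd i g x) / (g x) ^ 2 := by
  have : (fun y => f y / g y) = fun y => f y * (g y)⁻¹ := by funext y; rw [div_eq_mul_inv]
  rw [this, pd_mul hf (hg.fun_inv hx), pd_inv hg hx]
  field_simp
  ring

lemma pd_log (hf : DifferentiableAt ℝ f x) (hx : f x ≠ 0) :
    pd i (fun y => Real.log (f y)) x = pd i f x / f x := by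
  have := (hf.hasFDerivAt.log hx).fderiv
  simp [pd, this]; ring

lemma pd_sum {F : Fin N → Rn N → ℝ} (hF : ∀ j, DifferentiableAt ℝ (F j) x) :
    pd i (fun y => ∑ j, F j y) x = ∑ j, pd i (F j) x := by
  simp [pd, fderiv_fun_sum (fun j _ => hF j)]

lemma pd_comm (hf : ContDiff ℝ (⊤ : ℕ∞) f) (i j : Fin N) (x : Rn N) :
    pd i (pd j f) x = pd j (pd i f) x := by
  have hdf : Differentiable ℝ (fderiv ℝ f) :=
    (contDiff_infty_iff_fderiv.mp hf).2.differentiable (by norm_cast)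
  have key : ∀ (k l : Fin N), pd k (pd l f) x
      = fderiv ℝ (fderiv ℝ f) x (EuclideanSpace.single k 1) (EuclideanSpace.single l 1) := by
    intro k l
    have heq : pd l f = fun y =>
        (ContinuousLinearMap.apply ℝ ℝ (EuclideanSpace.single l 1)) (fderiv ℝ f y) := rfl
    rw [pd, heq, fderiv_comp' x (ContinuousLinearMap.apply ℝ ℝ
      (EuclideanSpace.single l 1)).differentiableAt (hdf x)]
    simp [pd]
  rw [key, key]
  have hsym := (hf.contDiffAt (x := x)).isSymmSndFDerivAt (by simp only [minSmoothness_of_isRCLikeNormedField]; exact WithTop.coe_le_coe.mpr le_top)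
  exact hsym _ _

lemma diffDiv {f g : Rn N → ℝ} (hf : Differentiable ℝ f) (hg : Differentiable ℝ g)
    (hne : ∀ y, g y ≠ 0) : Differentiable ℝ (fun y => f y / g y) := by
  simp only [div_eq_mul_inv]; exact hf.mul (hg.inv hne)

end Helpers

/-- for `κ(h) = κ/h` (so `κ'(h) = -κ/h²`), the capillary tensor divergence
`div K = ∇(hκ(h)Δh + ½(κ(h)+hκ'(h))|∇h|²) − div(κ(h)∇h⊗∇h)` equals, componentwise,
`κ h ∇(Δ ln h + ½|∇ ln h|²)`. -/
theorem stmt1 {N : ℕ} (h : Rn N → ℝ) (κ : ℝ) (hκ : 0 < κ)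
    (hsm : ContDiff ℝ (⊤ : ℕ∞) h) (hpos : ∀ x, 0 < h x) :
    ∀ (i : Fin N) (x : Rn N),
      pd i (fun y => h y * (κ / h y) * lap h y
          + (1/2) * ((κ / h y) + h y * (-(κ / (h y) ^ 2))) * gradSq h y) x
        - ∑ j, pd j (fun y => (κ / h y) * pd i h y * pd j h y) x
      = κ * h x *
          pd i (fun y => lap (fun z => Real.log (h z)) y
            + (1/2) * gradSq (fun z => Real.log (h z)) y) x := by
  intro i x
  have hne : ∀ y, h y ≠ 0 := fun y => (hpos y).ne'
  have d0 : Differentiable ℝ h := diffAll hsm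
  have sm1 : ∀ j : Fin N, ContDiff ℝ (⊤ : ℕ∞) (pd j h) := fun j => contDiff_pd hsm j
  have d1 : ∀ j : Fin N, Differentiable ℝ (pd j h) := fun j => diffAll (sm1 j)
  have d2 : ∀ j k : Fin N, Differentiable ℝ (pd k (pd j h)) :=
    fun j k => diffAll (contDiff_pd (sm1 j) k)
  have dlap : Differentiable ℝ (lap h) := by
    have e : lap h = fun y => ∑ j, pd j (pd j h) y := rfl
    rw [e]
    exact Differentiable.fun_sum (fun j _ => d2 j j)
  -- Term A
  have eA : (fun y => h y * (κ / h y) * lap h y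
      + (1/2) * ((κ / h y) + h y * (-(κ / (h y) ^ 2))) * gradSq h y)
      = fun y => κ * lap h y := by
    funext y
    have hy := hne y
    field_simp
    ring
  have hA : pd i (fun y => h y * (κ / h y) * lap h y
      + (1/2) * ((κ / h y) + h y * (-(κ / (h y) ^ 2))) * gradSq h y) x
      = κ * ∑ j, pd i (pd j (pd j h)) x := by
    rw [eA, pd_const_mul (dlap x) κ]
    congr 1
    have e : lap h = fun y => ∑ j, pd j (pd j h) y := rfl
    rw [e, pd_sum (fun j => (d2 j j) x)]
  -- Term B
  have hB : ∀ j : Fin N, pd j (fun y => (κ / h y) * pd i h y * pd j h y) x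
      = κ * (((pd i (pd j h) x * pd j h x + pd i h x * pd j (pd j h) x) * h x
          - pd i h x * pd j h x * pd j h x) / (h x) ^ 2) := by
    intro j
    have e1 : (fun y => (κ / h y) * pd i h y * pd j h y)
        = fun y => κ * (pd i h y * pd j h y / h y) := by
      funext y; ring
    rw [e1, pd_const_mul (diffDiv ((d1 i).fun_mul (d1 j)) d0 hne x) κ,
      pd_div ((d1 i).fun_mul (d1 j) x) (d0 x) (hne x),
      pd_mul (d1 i x) (d1 j x), pd_comm hsm j i x]
  -- RHS
  set L : Rn N → ℝ := fun z => Real.log (h z) with hL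
  have hLpd : ∀ j : Fin N, pd j L = fun y => pd j h y / h y := by
    intro j; funext y; exact pd_log (d0 y) (hne y)
  have eG : (fun y => lap L y + (1/2) * gradSq L y)
      = fun y => ∑ j, (pd j (pd j h) y / h y
          - (1/2) * (pd j h y * pd j h y / (h y * h y))) := by
    funext y
    have e2 : ∀ j : Fin N, pd j (pd j L) y
        = (pd j (pd j h) y * h y - pd j h y * pd j h y) / (h y) ^ 2 := by
      intro j; rw [hLpd j]; exact pd_div (d1 j y) (d0 y) (hne y)
    simp only [lap, gradSq]
    rw [Finset.mul_sum, ← Finset.sum_add_distrib]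
    refine Finset.sum_congr rfl fun j _ => ?_
    rw [e2 j]
    simp only [hLpd]
    have hy := hne y
    field_simp
    ring
  have dterm : ∀ j : Fin N, Differentiable ℝ (fun y => pd j (pd j h) y / h y
      - (1/2) * (pd j h y * pd j h y / (h y * h y))) := by
    intro j
    exact (diffDiv (d2 j j) d0 hne).sub
      ((diffDiv ((d1 j).fun_mul (d1 j)) (d0.fun_mul d0) (fun y => mul_ne_zero (hne y) (hne y))).const_mul _)
  have hR : pd i (fun y => lap L y + (1/2) * gradSq L y) x
      = ∑ j, ((pd i (pd j (pd j h)) x * h x - pd j (pd j h) x * pd i h x) / (h x) ^ 2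
          - (1/2) * (((pd i (pd j h) x * pd j h x + pd j h x * pd i (pd j h) x) * (h x * h x)
              - pd j h x * pd j h x * (pd i h x * h x + h x * pd i h x)) / (h x * h x) ^ 2)) := by
    rw [eG, pd_sum (fun j => dterm j x)]
    refine Finset.sum_congr rfl fun j _ => ?_
    rw [pd_sub ((diffDiv (d2 j j) d0 hne) x)
      (((diffDiv ((d1 j).fun_mul (d1 j)) (d0.fun_mul d0) (fun y => mul_ne_zero (hne y) (hne y))).const_mul _) x),
      pd_div (d2 j j x) (d0 x) (hne x),
      pd_const_mul ((diffDiv ((d1 j).fun_mul (d1 j)) (d0.fun_mul d0)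
        (fun y => mul_ne_zero (hne y) (hne y))) x) _,
      pd_div ((d1 j).fun_mul (d1 j) x) (d0.fun_mul d0 x) (mul_ne_zero (hne x) (hne x)),
      pd_mul (d1 j x) (d1 j x), pd_mul (d0 x) (d0 x)]
  -- Combine
  rw [hA, hR]
  rw [Finset.mul_sum, Finset.mul_sum]
  rw [← Finset.sum_sub_distrib]
  refine Finset.sum_congr rfl fun j _ => ?_
  rw [hB j]
  have hx := hne x
  field_simp
  ring
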